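/- Let t ≥ 3 be an integer, let G be a graph, let M be an induced matching in G, and let v be a vertex of G not covered by M. If H is a spanning subgraph of G satisfying the K_{1,t}-closure, then v has at most 2t − 2 neighbors in H among the endpoints of the edges of M. -/

import Mathlib

open SimpleGraph

/-- A spanning subgraph `H` of `G` *satisfies the `F`-closure* if for every vertex subset `S`
such that `H[S]` is isomorphic to `F`, the induced subgraph `G[S]` is not isomorphic to `F`. -/
def SatisfiesClosure {V W : Type*} (G H : SimpleGraph V) (F : SimpleGraph W) : Prop :=
  ∀ S : Set V, Nonempty ((H.induce S) ≃g F) → ¬ Nonempty ((G.induce S) ≃g F)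

/-- The star `K_{1,t}`: the center `none` is adjacent to the `t` leaves `some i`. -/
def K1t (t : ℕ) : SimpleGraph (Option (Fin t)) :=
  SimpleGraph.fromRel (fun a b => a = none ∧ b ≠ none)

lemma K1t_adj {t : ℕ} {a b : Option (Fin t)} :
    (K1t t).Adj a b ↔ (a = none ∧ b ≠ none) ∨ (b = none ∧ a ≠ none) := by
  unfold K1t
  rw [SimpleGraph.fromRel_adj]
  constructor
  · rintro ⟨_, h | h⟩
    · exact Or.inl h
    · exact Or.inr h
  · rintro (⟨ha, hb⟩ | ⟨hb, ha⟩)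
    · exact ⟨by rintro rfl; exact hb ha, Or.inl ⟨ha, hb⟩⟩
    · exact ⟨by rintro rfl; exact ha hb, Or.inr ⟨hb, ha⟩⟩

/-- Let `t ≥ 3`, let `M` be an induced matching in `G` and let `v` be a vertex not covered by
`M`. If `H` is a spanning subgraph of `G` satisfying the `K_{1,t}`-closure, then `v` has at most
`2t − 2` neighbors in `H` among the endpoints of the edges of `M`. -/
theorem stmt_15 {V : Type*} [Fintype V] (G : SimpleGraph V) (t : ℕ) (ht : 3 ≤ t)
    (M : G.Subgraph) (hM : M.IsMatching)
    (hind : ∀ x ∈ M.verts, ∀ y ∈ M.verts, G.Adj x y → M.Adj x y)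
    (v : V) (hv : v ∉ M.verts)
    (H : SimpleGraph V) (hH : H ≤ G) (hcl : SatisfiesClosure G H (K1t t)) :
    (H.neighborSet v ∩ M.verts).ncard ≤ 2 * t - 2 := by
  classical
  by_contra hcon
  push_neg at hcon
  set N : Set V := H.neighborSet v ∩ M.verts with hNdef
  have hNfin : N.Finite := Set.toFinite _
  set Nf : Finset V := hNfin.toFinset with hNf
  have hNcard : 2 * t - 2 < Nf.card := by
    rwa [Set.ncard_eq_toFinset_card _ hNfin] at hcon
  -- partner function for the matching
  choose p hp hpu using fun (x : V) (hx : x ∈ M.verts) => hM hx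
  have hNsub : ∀ x ∈ Nf, x ∈ M.verts := fun x hx => (hNfin.mem_toFinset.mp hx).2
  have hNadj : ∀ x ∈ Nf, H.Adj v x := fun x hx => (hNfin.mem_toFinset.mp hx).1
  set g : V → Sym2 V := fun x => if hx : x ∈ M.verts then s(x, p x hx) else s(x, x) with hgdef
  have hg : ∀ (x : V) (hx : x ∈ M.verts), g x = s(x, p x hx) := fun x hx => dif_pos hx
  -- fibers of g on Nf have size at most 2
  have hfiber : ∀ a ∈ Nf.image g, (Nf.filter (fun x => g x = a)).card ≤ 2 := by
    intro a ha
    obtain ⟨x0, hx0, hgx0⟩ := Finset.mem_image.mp ha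
    have hsub : Nf.filter (fun x => g x = a) ⊆ {x0, p x0 (hNsub x0 hx0)} := by
      intro y hy
      simp only [Finset.mem_filter] at hy
      obtain ⟨hyN, hgy⟩ := hy
      have h1 : s(y, p y (hNsub y hyN)) = s(x0, p x0 (hNsub x0 hx0)) := by
        rw [← hg y (hNsub y hyN), ← hg x0 (hNsub x0 hx0), hgy, hgx0]
      rw [Sym2.eq_iff] at h1
      rcases h1 with ⟨h, _⟩ | ⟨h, _⟩ <;> simp [h]
    calc (Nf.filter (fun x => g x = a)).card
        ≤ ({x0, p x0 (hNsub x0 hx0)} : Finset V).card := Finset.card_le_card hsub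
      _ ≤ 2 := (Finset.card_insert_le _ _).trans (by simp)
  have himg : t ≤ (Nf.image g).card := by
    have h2 : Nf.card ≤ 2 * (Nf.image g).card :=
      Finset.card_le_mul_card_image (f := g) Nf 2 hfiber
    omega
  obtain ⟨I, hIsub, hIcard⟩ := Finset.exists_subset_card_eq himg
  choose q hq hgq using fun (a : Sym2 V) (ha : a ∈ I) => Finset.mem_image.mp (hIsub ha)
  let e : I ≃ Fin t := I.equivFinOfCardEq hIcard
  let f : Fin t → V := fun i => q (e.symm i) (e.symm i).2
  have hfN : ∀ i, f i ∈ Nf := fun i => hq _ _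
  have hfg : ∀ i, g (f i) = (e.symm i : Sym2 V) := fun i => hgq _ _
  have hfM : ∀ i, f i ∈ M.verts := fun i => hNsub _ (hfN i)
  have hfadj : ∀ i, H.Adj v (f i) := fun i => hNadj _ (hfN i)
  have hfv : ∀ i, f i ≠ v := fun i h => hv (h ▸ hfM i)
  have hfinj : Function.Injective f := by
    intro i j h
    have h1 : (e.symm i : Sym2 V) = (e.symm j : Sym2 V) := by rw [← hfg, ← hfg, h]
    have := e.symm.injective (Subtype.ext h1)
    exact this
  have hfnM : ∀ i j, i ≠ j → ¬ M.Adj (f i) (f j) := by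
    intro i j hij hadj
    have h1 : f j = p (f i) (hfM i) := hpu _ _ _ hadj
    have h2 : f i = p (f j) (hfM j) := hpu _ _ _ hadj.symm
    have h3 : g (f i) = g (f j) := by
      rw [hg _ (hfM i), hg _ (hfM j), ← h1, ← h2, Sym2.eq_swap]
    have h4 : (e.symm i : Sym2 V) = (e.symm j : Sym2 V) := by rw [← hfg, ← hfg, h3]
    exact hij (e.symm.injective (Subtype.ext h4))
  have hfnG : ∀ i j, i ≠ j → ¬ G.Adj (f i) (f j) := fun i j hij hadj =>
    hfnM i j hij (hind _ (hfM i) _ (hfM j) hadj)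
  -- build the star
  let F : Option (Fin t) → V := fun o => o.elim v f
  have hFinj : Function.Injective F := by
    intro o1 o2 h
    cases o1 with
    | none => cases o2 with
      | none => rfl
      | some j => exact absurd h.symm (hfv j)
    | some i => cases o2 with
      | none => exact absurd h (hfv i)
      | some j => exact congrArg some (hfinj h)
  have key : ∀ (G' : SimpleGraph V), G' ≤ G → (∀ i, G'.Adj v (f i)) →
      ∀ o1 o2, G'.Adj (F o1) (F o2) ↔ (K1t t).Adj o1 o2 := by
    intro G' hG' hadjf o1 o2
    rw [K1t_adj]
    match o1, o2 with
    | none, none => simp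
    | none, some j =>
      simpa [F] using hadjf j
    | some i, none =>
      simpa [F] using (hadjf i).symm
    | some i, some j =>
      by_cases hij : i = j
      · subst hij; simp
      · have hng : ¬ G'.Adj (f i) (f j) := fun h => hfnG i j hij (hG' h)
        exact iff_of_false hng (by simp)
  let S : Set V := Set.range F
  have mkIso : ∀ (G' : SimpleGraph V),
      (∀ o1 o2, G'.Adj (F o1) (F o2) ↔ (K1t t).Adj o1 o2) →
      Nonempty ((G'.induce S) ≃g K1t t) := by
    intro G' hG'
    refine ⟨SimpleGraph.Iso.symm ⟨Equiv.ofInjective F hFinj, ?_⟩⟩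
    intro a b
    simp only [comap_adj, Function.Embedding.coe_subtype]
    exact hG' a b
  exact hcl S (mkIso H (key H hH hfadj)) (mkIso G (key G le_rfl (fun i => hH (hfadj i))))
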